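/- Let T be a directed tree, and O₁, O₂ ornamentations of T. Then O₁ ⋖ O₂ is a cover relation in the ornamentation lattice Orn(T) if and only if there exist vertices u, v with u ∉ O₁(v), O₂(v) = O₁(u) ∪ O₁(v), and O₁(w) = O₂(w) for all w ≠ v. Moreover, in this case u and v are uniquely determined by O₁ and O₂. -/

import Mathlib

/-- A directed path from `u` to `v` in the digraph `T` using only vertices of `U`. -/
def pathIn {V : Type*} (T : V → V → Prop) (U : Set V) (u v : V) : Prop :=
  Relation.ReflTransGen (fun a b => T a b ∧ a ∈ U ∧ b ∈ U) u v

/-- An ornament of `T` at `v`. -/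
def IsOrnament {V : Type*} (T : V → V → Prop) (v : V) (U : Set V) : Prop :=
  v ∈ U ∧ ∀ u ∈ U, pathIn T U u v

/-- An ornamentation of `T`. -/
def IsOrnamentation {V : Type*} (T : V → V → Prop) (O : V → Set V) : Prop :=
  (∀ v, IsOrnament T v (O v)) ∧ ∀ u v, u ∈ O v → O u ⊆ O v

/-- Componentwise order on ornamentations. -/
def ornLE {V : Type*} (O₁ O₂ : V → Set V) : Prop := ∀ v, O₁ v ⊆ O₂ v

def ornLT {V : Type*} (O₁ O₂ : V → Set V) : Prop := ornLE O₁ O₂ ∧ O₁ ≠ O₂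

/-- `O₁ ⋖ O₂` in the ornamentation lattice of `T`. -/
def ornCovBy {V : Type*} (T : V → V → Prop) (O₁ O₂ : V → Set V) : Prop :=
  ornLT O₁ O₂ ∧ ¬ ∃ O : V → Set V, IsOrnamentation T O ∧ ornLT O₁ O ∧ ornLT O O₂


open SimpleGraph Relation

namespace TreeOrnAux

variable {V : Type*} {T : V → V → Prop}

lemma adjT (hirr : ∀ v, ¬ T v v) {a b : V} (h : T a b) : (SimpleGraph.fromRel T).Adj a b := by
  rw [SimpleGraph.fromRel_adj]
  exact ⟨fun hab => hirr b (hab ▸ h), Or.inl h⟩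

/-- A walk all of whose darts follow the direction of `T`. -/
def DirW {a b : V} (p : (SimpleGraph.fromRel T).Walk a b) : Prop :=
  ∀ d ∈ p.darts, T d.fst d.snd

lemma isPath_concat {a b c : V} {p : (SimpleGraph.fromRel T).Walk a b} (hp : p.IsPath)
    (h : (SimpleGraph.fromRel T).Adj b c) (hc : c ∉ p.support) : (p.concat h).IsPath := by
  rw [SimpleGraph.Walk.isPath_def, SimpleGraph.Walk.support_concat]
  rw [SimpleGraph.Walk.isPath_def] at hp
  simp [List.nodup_append, hp, hc]
  exact fun x hx hxc => hc (hxc ▸ hx)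

lemma noFst {b x : V} (p : (SimpleGraph.fromRel T).Walk b x) (hp : p.IsPath) :
    ∀ d ∈ p.darts, d.fst ≠ x := by
  induction p with
  | nil => simp [SimpleGraph.Walk.darts_nil]
  | @cons a c _ h q ih =>
    intro d hd
    rw [SimpleGraph.Walk.darts_cons, List.mem_cons] at hd
    rcases hd with rfl | hd
    · rcases (SimpleGraph.Walk.cons_isPath_iff _ _).mp hp with ⟨_, ha⟩
      exact fun hax => ha (hax ▸ q.end_mem_support)
    · exact ih hp.of_cons d hd

lemma g1 [DecidableEq V] (htree : (SimpleGraph.fromRel T).IsTree) (hirr : ∀ v, ¬ T v v)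
    (hasymm : ∀ u v, T u v → ¬ T v u) {x y : V} (hxy : T x y)
    (q : (SimpleGraph.fromRel T).Walk y x) (hq : DirW q) : False := by
  have hp : q.bypass.IsPath := q.bypass_isPath
  have hdir : DirW q.bypass := fun d hd => hq d (q.darts_bypass_subset hd)
  have hcyc : (SimpleGraph.Walk.cons (adjT hirr hxy) q.bypass).IsCycle := by
    rw [SimpleGraph.Walk.cons_isCycle_iff]
    refine ⟨hp, fun he => ?_⟩
    rw [SimpleGraph.Walk.edges, List.mem_map] at he
    obtain ⟨d, hd, hde⟩ := he
    have hde' : s(d.fst, d.snd) = s(x, y) := hde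
    rw [Sym2.eq_iff] at hde'
    rcases hde' with ⟨h1, h2⟩ | ⟨h1, h2⟩
    · exact noFst q.bypass hp d hd h1
    · exact hasymm x y hxy (by have := hdir d hd; rwa [h1, h2] at this)
  exact htree.IsAcyclic _ hcyc

lemma g1s [DecidableEq V] (htree : (SimpleGraph.fromRel T).IsTree) (hirr : ∀ v, ¬ T v v)
    (hasymm : ∀ u v, T u v → ¬ T v u) {x y w : V} (hxy : T x y)
    (q : (SimpleGraph.fromRel T).Walk y w) (hq : DirW q) : x ∉ q.support := by
  intro hx
  exact g1 htree hirr hasymm hxy (q.takeUntil x hx)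
    (fun d hd => hq d (q.darts_takeUntil_subset hx hd))

lemma reach_walk (hirr : ∀ v, ¬ T v v) {x y : V} (h : Relation.ReflTransGen T x y) :
    ∃ p : (SimpleGraph.fromRel T).Walk x y, DirW p := by
  induction h using Relation.ReflTransGen.head_induction_on with
  | refl => exact ⟨SimpleGraph.Walk.nil, by simp [DirW]⟩
  | head hab _ ih =>
    obtain ⟨p, hp⟩ := ih
    refine ⟨SimpleGraph.Walk.cons (adjT hirr hab) p, ?_⟩
    intro d hd
    rw [SimpleGraph.Walk.darts_cons, List.mem_cons] at hd
    rcases hd with rfl | hd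
    · exact hab
    · exact hp d hd

lemma walk_reach {x y : V} (p : (SimpleGraph.fromRel T).Walk x y) (hp : DirW p) :
    Relation.ReflTransGen T x y := by
  induction p with
  | nil => exact Relation.ReflTransGen.refl
  | @cons a c _ h q ih =>
    refine Relation.ReflTransGen.head ?_ (ih (fun d hd => hp d ?_))
    · exact hp ⟨(a, c), h⟩ (by rw [SimpleGraph.Walk.darts_cons]; exact List.mem_cons_self)
    · rw [SimpleGraph.Walk.darts_cons]; exact List.mem_cons_of_mem _ hd

lemma reach_antisymm [DecidableEq V] (htree : (SimpleGraph.fromRel T).IsTree)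
    (hirr : ∀ v, ¬ T v v) (hasymm : ∀ u v, T u v → ¬ T v u) {a b : V}
    (h1 : Relation.ReflTransGen T a b) (h2 : Relation.ReflTransGen T b a) : a = b := by
  rcases h1.cases_head with rfl | ⟨c, hac, hcb⟩
  · rfl
  · exfalso
    obtain ⟨p, hp⟩ := reach_walk hirr hcb
    obtain ⟨q, hq⟩ := reach_walk hirr h2
    refine g1 htree hirr hasymm hac (p.append q) ?_
    intro d hd
    rw [SimpleGraph.Walk.darts_append, List.mem_append] at hd
    rcases hd with hd | hd
    · exact hp d hd
    · exact hq d hd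

lemma key [DecidableEq V] (htree : (SimpleGraph.fromRel T).IsTree) (hirr : ∀ v, ¬ T v v)
    (hasymm : ∀ u v, T u v → ¬ T v u) :
    ∀ {x u : V} (W : (SimpleGraph.fromRel T).Walk x u), DirW W →
      ∀ {v : V}, Relation.ReflTransGen T u v →
      ∀ (p : (SimpleGraph.fromRel T).Walk x v), DirW p → u ∈ p.support := by
  intro x u W
  induction W with
  | nil => intro _ v huv p hp; exact p.start_mem_support
  | @cons a y u h W ih =>
    intro hW v huv p hp
    have hTay : T a y := hW ⟨(a, y), h⟩ (by rw [SimpleGraph.Walk.darts_cons]; exact List.mem_cons_self)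
    have hWdir : DirW W := fun d hd => hW d (by rw [SimpleGraph.Walk.darts_cons]; exact List.mem_cons_of_mem _ hd)
    cases p with
    | nil =>
      -- v = a ; then reach a u and reach u a, so u = a
      have hau : Relation.ReflTransGen T a u :=
        Relation.ReflTransGen.head hTay (walk_reach W hWdir)
      have hua : u = a := reach_antisymm htree hirr hasymm huv hau
      rw [hua]
      exact SimpleGraph.Walk.start_mem_support _
    | @cons _ z _ hadj p' =>
      have hTaz : T a z := hp ⟨(a, z), hadj⟩ (by rw [SimpleGraph.Walk.darts_cons]; exact List.mem_cons_self)
      have hp' : DirW p' := fun d hd => hp d (by rw [SimpleGraph.Walk.darts_cons]; exact List.mem_cons_of_mem _ hd)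
      by_cases hyz : y = z
      · subst hyz
        have := ih hWdir huv p' hp'
        rw [SimpleGraph.Walk.support_cons]
        exact List.mem_cons_of_mem _ this
      · exfalso
        obtain ⟨W2, hW2⟩ := reach_walk hirr huv
        have hAdir : DirW (W.append W2) := by
          intro d hd
          rw [SimpleGraph.Walk.darts_append, List.mem_append] at hd
          rcases hd with hd | hd
          · exact hWdir d hd
          · exact hW2 d hd
        have hxA : a ∉ (W.append W2).support := g1s htree hirr hasymm hTay _ hAdir
        have hxB : a ∉ p'.support := g1s htree hirr hasymm hTaz p' hp'
        set C := ((W.append W2).append p'.reverse).bypass with hC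
        have hCpath : C.IsPath := SimpleGraph.Walk.bypass_isPath _
        have hxC : a ∉ C.support := by
          intro hmem
          have := ((W.append W2).append p'.reverse).support_bypass_subset hmem
          rw [SimpleGraph.Walk.mem_support_append_iff] at this
          rcases this with h' | h'
          · exact hxA h'
          · rw [SimpleGraph.Walk.support_reverse, List.mem_reverse] at h'
            exact hxB h'
        have hDpath : (C.concat (adjT hirr hTaz).symm).IsPath := isPath_concat hCpath _ hxC
        have hcyc : (SimpleGraph.Walk.cons (adjT hirr hTay) (C.concat (adjT hirr hTaz).symm)).IsCycle := by
          rw [SimpleGraph.Walk.cons_isCycle_iff]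
          refine ⟨hDpath, fun he => ?_⟩
          rw [SimpleGraph.Walk.edges_concat, List.concat_eq_append, List.mem_append] at he
          rcases he with he | he
          · exact hxC (C.fst_mem_support_of_mem_edges he)
          · rw [List.mem_singleton, Sym2.eq_iff] at he
            rcases he with ⟨h1, h2⟩ | ⟨h1, h2⟩
            · exact hirr a (h2 ▸ hTay)
            · exact hyz h2
        exact htree.IsAcyclic _ hcyc

lemma pathIn_reach {U : Set V} {x y : V}
    (h : Relation.ReflTransGen (fun a b => T a b ∧ a ∈ U ∧ b ∈ U) x y) :
    Relation.ReflTransGen T x y :=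
  Relation.ReflTransGen.mono (fun a b (hab : T a b ∧ a ∈ U ∧ b ∈ U) => hab.1) _ _ h

lemma pathIn_walk (hirr : ∀ v, ¬ T v v) {U : Set V} {x y : V}
    (h : Relation.ReflTransGen (fun a b => T a b ∧ a ∈ U ∧ b ∈ U) x y) (hx : x ∈ U) :
    ∃ p : (SimpleGraph.fromRel T).Walk x y, DirW p ∧ ∀ z ∈ p.support, z ∈ U := by
  induction h using Relation.ReflTransGen.head_induction_on with
  | refl =>
    refine ⟨SimpleGraph.Walk.nil, by simp [DirW], ?_⟩
    intro z hz
    rw [SimpleGraph.Walk.support_nil, List.mem_singleton] at hz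
    exact hz ▸ hx
  | @head a c hab hcy ih =>
    obtain ⟨p, hp, hmem⟩ := ih hab.2.2
    refine ⟨SimpleGraph.Walk.cons (adjT hirr hab.1) p, ?_, ?_⟩
    · intro d hd
      rw [SimpleGraph.Walk.darts_cons, List.mem_cons] at hd
      rcases hd with rfl | hd
      · exact hab.1
      · exact hp d hd
    · intro z hz
      rw [SimpleGraph.Walk.support_cons, List.mem_cons] at hz
      rcases hz with rfl | hz
      · exact hab.2.1
      · exact hmem z hz

lemma firstEntry {U S : Set V} {x v : V}
    (h : Relation.ReflTransGen (fun a b => T a b ∧ a ∈ U ∧ b ∈ U) x v)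
    (hx : x ∉ S) (hv : v ∈ S) :
    ∃ a b : V, T a b ∧ a ∈ U ∧ b ∈ U ∧ a ∉ S ∧ b ∈ S := by
  classical
  revert hx
  induction h using Relation.ReflTransGen.head_induction_on with
  | refl => exact fun hx => absurd hv hx
  | @head a c hab hcy ih =>
    intro hax
    by_cases hcS : c ∈ S
    · exact ⟨a, c, hab.1, hab.2.1, hab.2.2, hax, hcS⟩
    · exact ih hcS

end TreeOrnAux

/-- Description of the cover relations in the ornamentation lattice of a directed tree,
together with the uniqueness of the witnessing pair `(u, v)`. -/
theorem tree_orn_cover {V : Type*} (T : V → V → Prop)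
    (htree : (SimpleGraph.fromRel T).IsTree)
    (hirr : ∀ v, ¬ T v v) (hasymm : ∀ u v, T u v → ¬ T v u)
    (O₁ O₂ : V → Set V) (h₁ : IsOrnamentation T O₁) (h₂ : IsOrnamentation T O₂) :
    (ornCovBy T O₁ O₂ ↔ ∃ u v : V, u ∉ O₁ v ∧ O₂ v = O₁ u ∪ O₁ v ∧
      ∀ w : V, w ≠ v → O₁ w = O₂ w) ∧
    (ornCovBy T O₁ O₂ → ∀ u v u' v' : V,
      (u ∉ O₁ v ∧ O₂ v = O₁ u ∪ O₁ v ∧ ∀ w : V, w ≠ v → O₁ w = O₂ w) →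
      (u' ∉ O₁ v' ∧ O₂ v' = O₁ u' ∪ O₁ v' ∧ ∀ w : V, w ≠ v' → O₁ w = O₂ w) →
      u = u' ∧ v = v') := by

  classical
  have memReach : ∀ (O : V → Set V), IsOrnamentation T O → ∀ {a b : V}, a ∈ O b →
      Relation.ReflTransGen T a b :=
    fun O hO a b hab => TreeOrnAux.pathIn_reach ((hO.1 b).2 a hab)
  have antisym : ∀ {a b : V}, Relation.ReflTransGen T a b → Relation.ReflTransGen T b a → a = b :=
    fun {_ _} => TreeOrnAux.reach_antisymm htree hirr hasymm
  have huniq : ∀ u v u' v' : V,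
      (u ∉ O₁ v ∧ O₂ v = O₁ u ∪ O₁ v ∧ ∀ w : V, w ≠ v → O₁ w = O₂ w) →
      (u' ∉ O₁ v' ∧ O₂ v' = O₁ u' ∪ O₁ v' ∧ ∀ w : V, w ≠ v' → O₁ w = O₂ w) →
      u = u' ∧ v = v' := by
    rintro u v u' v' ⟨hu, hv, hw⟩ ⟨hu', hv', hw'⟩
    have hvv : v = v' := by
      by_contra hne
      have h1 : O₁ v = O₂ v := hw' v hne
      have h2 : u ∈ O₂ v := by rw [hv]; exact Or.inl (h₁.1 u).1
      rw [← h1] at h2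
      exact hu h2
    subst hvv
    refine ⟨?_, rfl⟩
    have h12 : O₁ u ∪ O₁ v = O₁ u' ∪ O₁ v := hv.symm.trans hv'
    have hu'mem : u' ∈ O₁ u := by
      have h3 : u' ∈ O₁ u' ∪ O₁ v := Or.inl (h₁.1 u').1
      rw [← h12] at h3
      rcases h3 with h | h
      · exact h
      · exact absurd h hu'
    have humem : u ∈ O₁ u' := by
      have h3 : u ∈ O₁ u ∪ O₁ v := Or.inl (h₁.1 u).1
      rw [h12] at h3
      rcases h3 with h | h
      · exact h
      · exact absurd h hu
    exact antisym (memReach O₁ h₁ humem) (memReach O₁ h₁ hu'mem)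
  have hbackward : ∀ u v : V, u ∉ O₁ v → O₂ v = O₁ u ∪ O₁ v →
      (∀ w : V, w ≠ v → O₁ w = O₂ w) → ornCovBy T O₁ O₂ := by
    intro u v hu hv hw
    have hle : ornLE O₁ O₂ := by
      intro z
      by_cases hz : z = v
      · subst z; rw [hv]; exact Set.subset_union_right
      · rw [hw z hz]
    have huO2 : u ∈ O₂ v := by rw [hv]; exact Or.inl (h₁.1 u).1
    have hne : O₁ ≠ O₂ := by
      intro h
      rw [h] at hu; exact hu huO2
    refine ⟨⟨hle, hne⟩, ?_⟩
    rintro ⟨O, hO, ⟨hle1, hne1⟩, ⟨hle2, hne2⟩⟩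
    have hOw : ∀ w, w ≠ v → O w = O₁ w := by
      intro w hwv
      exact subset_antisymm (by rw [hw w hwv]; exact hle2 w) (hle1 w)
    have hx : ∃ x, x ∈ O v ∧ x ∉ O₁ v := by
      by_contra hc
      push_neg at hc
      apply hne1
      funext z
      by_cases hz : z = v
      · subst z; exact subset_antisymm (hle1 v) hc
      · exact (hOw z hz).symm
    obtain ⟨x, hxO, hxO1⟩ := hx
    have hxU : x ∈ O₁ u := by
      have h3 := hle2 v hxO
      rw [hv] at h3
      rcases h3 with h | h
      · exact h
      · exact absurd h hxO1
    have hreach1 : Relation.ReflTransGen T x u := memReach O₁ h₁ hxU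
    have hreach2 : Relation.ReflTransGen T u v := memReach O₂ h₂ huO2
    obtain ⟨p, hp, hpmem⟩ := TreeOrnAux.pathIn_walk hirr ((hO.1 v).2 x hxO) hxO
    have huOv : u ∈ O v := by
      obtain ⟨W, hW⟩ := TreeOrnAux.reach_walk hirr hreach1
      exact hpmem u (TreeOrnAux.key htree hirr hasymm W hW hreach2 p hp)
    have huv : u ≠ v := by
      intro h
      rw [h] at hu
      exact hu (h₁.1 v).1
    have hsub : O₁ u ⊆ O v := by
      have h3 := hO.2 u v huOv
      rwa [hOw u huv] at h3
    apply hne2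
    funext z
    by_cases hz : z = v
    · subst z
      refine subset_antisymm (hle2 v) ?_
      rw [hv]
      exact Set.union_subset hsub (hle1 v)
    · rw [hOw z hz, hw z hz]
  have hforward : ornCovBy T O₁ O₂ → ∃ u v : V, u ∉ O₁ v ∧ O₂ v = O₁ u ∪ O₁ v ∧
      ∀ w : V, w ≠ v → O₁ w = O₂ w := by
    rintro ⟨⟨hle, hne⟩, hnomid⟩
    have hstep1 : ∀ v₀, O₁ v₀ ≠ O₂ v₀ → ∀ w, O₁ w ≠ O₂ w → w ∈ O₁ v₀ := by
      intro v₀ hv₀ w hw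
      by_contra hwv
      set O : V → Set V := fun z => if z ∈ O₁ v₀ ∧ O₁ z ≠ O₂ z then O₁ z else O₂ z with hOdef
      have hOcases : ∀ z, O z = O₁ z ∨ O z = O₂ z := by
        intro z
        by_cases h : z ∈ O₁ v₀ ∧ O₁ z ≠ O₂ z
        · left; simp only [hOdef]; exact if_pos h
        · right; simp only [hOdef]; exact if_neg h
      have hO1le : ornLE O₁ O := by
        intro z
        rcases hOcases z with h | h <;> rw [h]
        · exact hle z
      have hOle2 : ornLE O O₂ := by
        intro z
        rcases hOcases z with h | h <;> rw [h]
        exact hle z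
      have horn : IsOrnamentation T O := by
        constructor
        · intro z
          rcases hOcases z with h | h <;> rw [h]
          · exact h₁.1 z
          · exact h₂.1 z
        · intro s z hs
          by_cases hz : z ∈ O₁ v₀ ∧ O₁ z ≠ O₂ z
          · have hOz : O z = O₁ z := by simp only [hOdef]; exact if_pos hz
            rw [hOz] at hs ⊢
            by_cases hsS : s ∈ O₁ v₀ ∧ O₁ s ≠ O₂ s
            · have hOs : O s = O₁ s := by simp only [hOdef]; exact if_pos hsS
              rw [hOs]; exact h₁.2 s z hs
            · have hOs : O s = O₂ s := by simp only [hOdef]; exact if_neg hsS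
              have hsv : s ∈ O₁ v₀ := h₁.2 z v₀ hz.1 hs
              have heq : O₁ s = O₂ s := by
                by_contra hc
                exact hsS ⟨hsv, hc⟩
              rw [hOs, ← heq]
              exact h₁.2 s z hs
          · have hOz : O z = O₂ z := by simp only [hOdef]; exact if_neg hz
            rw [hOz] at hs ⊢
            intro t ht
            exact h₂.2 s z hs (hOle2 s ht)
      have hOv₀ : O v₀ = O₁ v₀ := by simp only [hOdef]; exact if_pos ⟨(h₁.1 v₀).1, hv₀⟩
      have hOw : O w = O₂ w := by
        have hc : ¬(w ∈ O₁ v₀ ∧ O₁ w ≠ O₂ w) := fun hc => hwv hc.1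
        simp only [hOdef]; exact if_neg hc
      exact hnomid ⟨O, horn,
        ⟨hO1le, fun h => hw ((congrFun h w).trans hOw)⟩,
        ⟨hOle2, fun h => hv₀ (hOv₀.symm.trans (congrFun h v₀))⟩⟩
    have hDne : ∃ v, O₁ v ≠ O₂ v := by
      by_contra h; push_neg at h; exact hne (funext h)
    obtain ⟨v, hv⟩ := hDne
    have hD : ∀ w, w ≠ v → O₁ w = O₂ w := by
      intro w hwv
      by_contra hw
      have h1 := hstep1 v hv w hw
      have h2 := hstep1 w hw v hv
      exact hwv (antisym (memReach O₁ h₁ h1) (memReach O₁ h₁ h2))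
    have hxe : ∃ x, x ∈ O₂ v ∧ x ∉ O₁ v := by
      by_contra hc; push_neg at hc
      exact hv (subset_antisymm (hle v) hc)
    obtain ⟨x, hx2, hx1⟩ := hxe
    obtain ⟨u, y, hTuy, huO2, hyO2, huS, hyS⟩ :=
      TreeOrnAux.firstEntry ((h₂.1 v).2 x hx2) hx1 (h₁.1 v).1
    set O' : V → Set V := fun z => if z = v then O₁ u ∪ O₁ v else O₁ z with hO'def
    have hO'v : O' v = O₁ u ∪ O₁ v := by simp only [hO'def, if_true, eq_self_iff_true]
    have hO'w : ∀ z, z ≠ v → O' z = O₁ z := fun z hz => by simp only [hO'def]; exact if_neg hz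
    have horn : IsOrnamentation T O' := by
      constructor
      · intro z
        by_cases hz : z = v
        · subst z
          rw [hO'v]
          refine ⟨Or.inr (h₁.1 v).1, ?_⟩
          intro s hs
          rcases hs with hs | hs
          · have p1 : pathIn T (O₁ u ∪ O₁ v) s u :=
              Relation.ReflTransGen.mono
                (fun a b (hab : T a b ∧ a ∈ O₁ u ∧ b ∈ O₁ u) => (⟨hab.1, Or.inl hab.2.1, Or.inl hab.2.2⟩ : T a b ∧ a ∈ O₁ u ∪ O₁ v ∧ b ∈ O₁ u ∪ O₁ v)) _ _ ((h₁.1 u).2 s hs)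
            have p2 : pathIn T (O₁ u ∪ O₁ v) s y :=
              Relation.ReflTransGen.tail p1 ⟨hTuy, Or.inl (h₁.1 u).1, Or.inr hyS⟩
            have p3 : pathIn T (O₁ u ∪ O₁ v) y v :=
              Relation.ReflTransGen.mono
                (fun a b (hab : T a b ∧ a ∈ O₁ v ∧ b ∈ O₁ v) => (⟨hab.1, Or.inr hab.2.1, Or.inr hab.2.2⟩ : T a b ∧ a ∈ O₁ u ∪ O₁ v ∧ b ∈ O₁ u ∪ O₁ v)) _ _ ((h₁.1 v).2 y hyS)
            exact Relation.ReflTransGen.trans p2 p3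
          · exact Relation.ReflTransGen.mono
              (fun a b (hab : T a b ∧ a ∈ O₁ v ∧ b ∈ O₁ v) => (⟨hab.1, Or.inr hab.2.1, Or.inr hab.2.2⟩ : T a b ∧ a ∈ O₁ u ∪ O₁ v ∧ b ∈ O₁ u ∪ O₁ v)) _ _ ((h₁.1 v).2 s hs)
        · rw [hO'w z hz]; exact h₁.1 z
      · intro s z hs
        by_cases hz : z = v
        · subst z
          rw [hO'v] at hs ⊢
          by_cases hsv : s = v
          · subst s; rw [hO'v]
          · rw [hO'w s hsv]
            rcases hs with hs | hs
            · exact (h₁.2 s u hs).trans Set.subset_union_left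
            · exact (h₁.2 s v hs).trans Set.subset_union_right
        · rw [hO'w z hz] at hs ⊢
          by_cases hsv : s = v
          · subst s
            rw [hO'v]
            have hvz2 : v ∈ O₂ z := hle z hs
            have huz2 : u ∈ O₂ z := h₂.2 v z hvz2 huO2
            have huz1 : u ∈ O₁ z := by rw [hD z hz]; exact huz2
            exact Set.union_subset (h₁.2 u z huz1) (h₁.2 v z hs)
          · rw [hO'w s hsv]; exact h₁.2 s z hs
    have hO'le2 : ornLE O' O₂ := by
      intro z
      by_cases hz : z = v
      · subst z; rw [hO'v]
        exact Set.union_subset ((hle u).trans (h₂.2 u v huO2)) (hle v)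
      · rw [hO'w z hz]; exact hle z
    have h1le : ornLE O₁ O' := by
      intro z
      by_cases hz : z = v
      · subst z; rw [hO'v]; exact Set.subset_union_right
      · rw [hO'w z hz]
    have hne1 : O₁ ≠ O' := by
      intro h
      have h3 : u ∈ O' v := by rw [hO'v]; exact Or.inl (h₁.1 u).1
      rw [← congrFun h v] at h3
      exact huS h3
    have hO'eq : O' = O₂ := by
      by_contra hc
      exact hnomid ⟨O', horn, ⟨h1le, hne1⟩, ⟨hO'le2, hc⟩⟩
    exact ⟨u, v, huS, by rw [← hO'eq, hO'v], hD⟩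
  refine ⟨⟨hforward, ?_⟩, fun _ => huniq⟩
  rintro ⟨u, v, hu, hv, hw⟩
  exact hbackward u v hu hv hw
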